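/- Let N ≥ 1, σ_w, σ_n, σ_wn > 0, Δt > 0, let φ ∈ ℝ^N with φ_i > 0 for all i, and let A_w, A_n be symmetric positive-semidefinite real N×N matrices. Let s, s' ∈ ℝ^N with 0 < s_i < 1, 0 < s'_i < 1 and s'_i ≠ s_i for all i, let p ∈ ℝ^N, and with H(x, y) = (x·ln x − y·ln y)/(x − y) define μ_w, μ_n ∈ ℝ^N by μ_{w,i} = σ_w·(H(s'_i, s_i) − 1) + σ_wn·(1 − (s_i + s'_i)/2) + Δt·(ln s'_i − ln s_i) and μ_{n,i} = σ_n·(H(1 − s'_i, 1 − s_i) − 1) + σ_wn·(s_i + s'_i)/2 + Δt·(ln(1 − s'_i) − ln(1 − s_i)). Assume the second-order scheme relations hold: for every i, φ_i·(s'_i − s_i)/Δt = −(A_w(p + μ_w))_i and φ_i·((1 − s'_i) − (1 − s_i))/Δt = −(A_n(p + μ_n))_i. Then, with F(s) = σ_w·s·(ln s − 1) + σ_n·(1 − s)·(ln(1 − s) − 1) + σ_wn·s·(1 − s), the discrete energy E(v) = Σ_i φ_i·F(v_i) satisfies (E(s') − E(s))/Δt ≤ −(p + μ_w)ᵀ A_w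 (p + μ_w) − (p + μ_n)ᵀ A_n (p + μ_n) ≤ 0. -/

import Mathlib

/-- The secant-slope quotient of `x ↦ x log x`. -/
noncomputable def Hsec (x y : ℝ) : ℝ := (x * Real.log x - y * Real.log y) / (x - y)

lemma hsec_mul {x y : ℝ} (h : x ≠ y) :
    (x - y) * Hsec x y = x * Real.log x - y * Real.log y := by
  unfold Hsec
  field_simp [sub_ne_zero.mpr h]

lemma log_diff_nonneg {x y : ℝ} (hx : 0 < x) (hy : 0 < y) :
    0 ≤ (x - y) * (Real.log x - Real.log y) := by
  rcases le_total x y with h | h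
  · have hl := Real.log_le_log hx h
    nlinarith
  · have hl := Real.log_le_log hy h
    nlinarith

lemma Fdiff_le (σw σn σwn Δt : ℝ) (hΔt : 0 < Δt) {x y : ℝ}
    (hx0 : 0 < x) (hx1 : x < 1) (hy0 : 0 < y) (hy1 : y < 1) (hne : x ≠ y) :
    (σw * x * (Real.log x - 1) + σn * (1 - x) * (Real.log (1 - x) - 1) + σwn * x * (1 - x))
      - (σw * y * (Real.log y - 1) + σn * (1 - y) * (Real.log (1 - y) - 1) + σwn * y * (1 - y))
      ≤ (x - y) * (σw * (Hsec x y - 1) + σwn * (1 - (y + x) / 2)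
            + Δt * (Real.log x - Real.log y))
        + ((1 - x) - (1 - y)) * (σn * (Hsec (1 - x) (1 - y) - 1) + σwn * ((y + x) / 2)
            + Δt * (Real.log (1 - x) - Real.log (1 - y))) := by
  have h1 := hsec_mul hne
  have h2 : ((1 - x) - (1 - y)) * Hsec (1 - x) (1 - y)
      = (1 - x) * Real.log (1 - x) - (1 - y) * Real.log (1 - y) :=
    hsec_mul (by intro h; exact hne (by linarith))
  have h3 : 0 ≤ Δt * ((x - y) * (Real.log x - Real.log y)) :=
    mul_nonneg hΔt.le (log_diff_nonneg hx0 hy0)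
  have h4 : 0 ≤ Δt * (((1 - x) - (1 - y)) * (Real.log (1 - x) - Real.log (1 - y))) :=
    mul_nonneg hΔt.le (log_diff_nonneg (by linarith) (by linarith))
  have heq : ((x - y) * (σw * (Hsec x y - 1) + σwn * (1 - (y + x) / 2)
            + Δt * (Real.log x - Real.log y))
        + ((1 - x) - (1 - y)) * (σn * (Hsec (1 - x) (1 - y) - 1) + σwn * ((y + x) / 2)
            + Δt * (Real.log (1 - x) - Real.log (1 - y))))
      = ((σw * x * (Real.log x - 1) + σn * (1 - x) * (Real.log (1 - x) - 1) + σwn * x * (1 - x))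
      - (σw * y * (Real.log y - 1) + σn * (1 - y) * (Real.log (1 - y) - 1) + σwn * y * (1 - y)))
        + Δt * ((x - y) * (Real.log x - Real.log y))
        + Δt * (((1 - x) - (1 - y)) * (Real.log (1 - x) - Real.log (1 - y))) := by
    linear_combination σw * h1 + σn * h2
  linarith

/-- Original energy dissipation law for the second-order scheme
(abstract finite-dimensional formulation). -/
theorem stmt14 (N : ℕ) (hN : 1 ≤ N) (σw σn σwn Δt : ℝ)
    (hσw : 0 < σw) (hσn : 0 < σn) (hσwn : 0 < σwn) (hΔt : 0 < Δt)
    (φ : Fin N → ℝ) (hφ : ∀ i, 0 < φ i)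
    (Aw An : Matrix (Fin N) (Fin N) ℝ) (hAw : Aw.PosSemidef) (hAn : An.PosSemidef)
    (s s' p : Fin N → ℝ)
    (hs : ∀ i, s i ∈ Set.Ioo (0 : ℝ) 1) (hs' : ∀ i, s' i ∈ Set.Ioo (0 : ℝ) 1)
    (hne : ∀ i, s' i ≠ s i)
    (μw μn : Fin N → ℝ)
    (hμw : ∀ i, μw i = σw * (Hsec (s' i) (s i) - 1) + σwn * (1 - (s i + s' i) / 2)
      + Δt * (Real.log (s' i) - Real.log (s i)))
    (hμn : ∀ i, μn i = σn * (Hsec (1 - s' i) (1 - s i) - 1) + σwn * ((s i + s' i) / 2)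
      + Δt * (Real.log (1 - s' i) - Real.log (1 - s i)))
    (hschemew : ∀ i, φ i * (s' i - s i) / Δt = -(Aw.mulVec (p + μw)) i)
    (hschemen : ∀ i, φ i * ((1 - s' i) - (1 - s i)) / Δt = -(An.mulVec (p + μn)) i) :
    let F : ℝ → ℝ := fun x => σw * x * (Real.log x - 1) +
      σn * (1 - x) * (Real.log (1 - x) - 1) + σwn * x * (1 - x)
    let E : (Fin N → ℝ) → ℝ := fun v => ∑ i, φ i * F (v i)
    (E s' - E s) / Δt ≤
        -dotProduct (p + μw) (Aw.mulVec (p + μw))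
          - dotProduct (p + μn) (An.mulVec (p + μn)) ∧
      -dotProduct (p + μw) (Aw.mulVec (p + μw))
          - dotProduct (p + μn) (An.mulVec (p + μn)) ≤ 0 := by
  intro F E
  have hw0 : 0 ≤ dotProduct (p + μw) (Aw.mulVec (p + μw)) := by
    have := hAw.dotProduct_mulVec_nonneg (p + μw)
    simpa using this
  have hn0 : 0 ≤ dotProduct (p + μn) (An.mulVec (p + μn)) := by
    have := hAn.dotProduct_mulVec_nonneg (p + μn)
    simpa using this
  refine ⟨?_, by linarith⟩
  have hE : (E s' - E s) / Δt = ∑ i, φ i * (F (s' i) - F (s i)) / Δt := by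
    simp only [E]
    rw [← Finset.sum_sub_distrib, Finset.sum_div]
    exact Finset.sum_congr rfl fun i _ => by ring
  have hRHS : -dotProduct (p + μw) (Aw.mulVec (p + μw))
          - dotProduct (p + μn) (An.mulVec (p + μn))
      = ∑ i, (-((p + μw) i * (Aw.mulVec (p + μw)) i)
          - (p + μn) i * (An.mulVec (p + μn)) i) := by
    simp only [dotProduct, Finset.sum_sub_distrib, Finset.sum_neg_distrib]
  rw [hE, hRHS]
  apply Finset.sum_le_sum
  intro i _
  have hFle := Fdiff_le σw σn σwn Δt hΔt (hs' i).1 (hs' i).2 (hs i).1 (hs i).2 (hne i)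
  have hFle' : F (s' i) - F (s i)
      ≤ (s' i - s i) * μw i + ((1 - s' i) - (1 - s i)) * μn i := by
    simp only [F]
    rw [hμw i, hμn i]
    exact hFle
  have hkey : φ i * (F (s' i) - F (s i))
      ≤ φ i * ((s' i - s i) * μw i + ((1 - s' i) - (1 - s i)) * μn i) :=
    mul_le_mul_of_nonneg_left hFle' (hφ i).le
  calc φ i * (F (s' i) - F (s i)) / Δt
      ≤ φ i * ((s' i - s i) * μw i + ((1 - s' i) - (1 - s i)) * μn i) / Δt := by
        exact (div_le_div_iff_of_pos_right hΔt).mpr hkey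
    _ = (p i + μw i) * (φ i * (s' i - s i) / Δt)
        + (p i + μn i) * (φ i * ((1 - s' i) - (1 - s i)) / Δt) := by ring
    _ = (p i + μw i) * (-(Aw.mulVec (p + μw)) i)
        + (p i + μn i) * (-(An.mulVec (p + μn)) i) := by
        rw [hschemew i, hschemen i]
    _ = -((p + μw) i * (Aw.mulVec (p + μw)) i)
        - (p + μn) i * (An.mulVec (p + μn)) i := by
        simp only [Pi.add_apply]; ring
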